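/- In the over-parameterized setting (N > m), the gradient-descent solution θ̂ = P_⊥(θ₀) + Σ⁺XᵀY with Gaussian initialization θ₀ ∼ N(0, (1/N)I) yields, for fixed x, Var(h(x)) = (1/N)‖P_⊥(x)‖² + σ² Tr(xxᵀΣ⁺), where P_⊥ is orthogonal projection onto the null space of X, Σ = XᵀX, and Σ⁺ is the Moore–Penrose pseudoinverse. -/

import Mathlib

open MeasureTheory ProbabilityTheory Matrix
open scoped NNReal

section Aux
open Real Set Filter
open scoped ENNReal

lemma aux_integrable_sq_exp {b : ℝ} (hb : 0 < b) :
    Integrable (fun x : ℝ => x ^ 2 * Real.exp (-b * x ^ 2)) := by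
  have h := integrable_rpow_mul_exp_neg_mul_sq hb (s := 2) (by norm_num)
  have : (fun x : ℝ => x ^ (2:ℝ) * Real.exp (-b * x ^ 2))
      = fun x : ℝ => x ^ 2 * Real.exp (-b * x ^ 2) := by
    funext x; rw [show ((2:ℝ) = ((2:ℕ):ℝ)) by norm_num, Real.rpow_natCast]
  rwa [this] at h

lemma aux_integral_sq_exp_Ioi {b : ℝ} (hb : 0 < b) :
    ∫ x in Ioi (0:ℝ), x ^ 2 * Real.exp (-b * x ^ 2)
      = (2*b)⁻¹ * (Real.sqrt (π / b) / 2) := by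
  have hint2 := aux_integrable_sq_exp hb
  have hintE : Integrable (fun x : ℝ => Real.exp (-b * x ^ 2)) := integrable_exp_neg_mul_sq hb
  set F : ℝ → ℝ := fun x => -(2*b)⁻¹ * x * Real.exp (-b * x ^ 2) with hF
  have hderiv : ∀ x : ℝ, HasDerivAt F
      (x ^ 2 * Real.exp (-b * x ^ 2) - (2*b)⁻¹ * Real.exp (-b * x ^ 2)) x := by
    intro x
    have h1 : HasDerivAt (fun x : ℝ => -(2*b)⁻¹ * x) (-(2*b)⁻¹) x := by
      simpa using (hasDerivAt_id x).const_mul (-(2*b)⁻¹)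
    have h2 : HasDerivAt (fun x : ℝ => Real.exp (-b * x ^ 2))
        (Real.exp (-b * x ^ 2) * (-b * (2 * x))) x := by
      have : HasDerivAt (fun x : ℝ => -b * x ^ 2) (-b * (2 * x)) x := by
        simpa using ((hasDerivAt_pow 2 x).const_mul (-b))
      exact this.exp
    have h3 := h1.mul h2
    refine h3.congr_deriv ?_
    have hbne : b ≠ 0 := ne_of_gt hb
    have hbb : b * b⁻¹ = 1 := mul_inv_cancel₀ hbne
    linear_combination (x ^ 2 * Real.exp (-b * x ^ 2)) * hbb
  have htend : Tendsto F atTop (nhds 0) := by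
    have ho : (fun x : ℝ => x ^ (1:ℝ) * Real.exp (-b * x ^ 2))
        =o[atTop] fun x : ℝ => Real.exp (-(1/2) * x) :=
      rpow_mul_exp_neg_mul_sq_isLittleO_exp_neg hb 1
    have h0 : Tendsto (fun x : ℝ => Real.exp (-(1/2) * x)) atTop (nhds 0) := by
      have hc : Tendsto (fun x : ℝ => (1/2) * x) atTop atTop :=
        (tendsto_const_mul_atTop_of_pos (by norm_num)).mpr tendsto_id
      have := Real.tendsto_exp_neg_atTop_nhds_zero.comp hc
      simpa [Function.comp_def] using this
    have h1 : Tendsto (fun x : ℝ => x * Real.exp (-b * x ^ 2)) atTop (nhds 0) := by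
      have h2 := ho.trans_tendsto h0
      refine h2.congr' ?_
      filter_upwards [eventually_gt_atTop (0:ℝ)] with x hx
      rw [Real.rpow_one]
    have h3 := h1.const_mul (-(2*b)⁻¹)
    rw [mul_zero] at h3
    refine h3.congr ?_
    intro x; rw [hF]; ring
  have key := integral_Ioi_of_hasDerivAt_of_tendsto (a := 0) (m := 0)
    (f := F)
    (f' := fun x => x ^ 2 * Real.exp (-b * x ^ 2) - (2*b)⁻¹ * Real.exp (-b * x ^ 2))
    (hderiv 0).continuousAt.continuousWithinAt
    (fun x _ => hderiv x)
    ((hint2.sub (hintE.const_mul _)).integrableOn)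
    htend
  have hF0 : F 0 = 0 := by simp [hF]
  rw [integral_sub hint2.integrableOn (hintE.const_mul _).integrableOn, hF0, sub_zero,
    integral_const_mul, integral_gaussian_Ioi] at key
  linarith [key]

lemma aux_integral_sq_exp {b : ℝ} (hb : 0 < b) :
    ∫ x : ℝ, x ^ 2 * Real.exp (-b * x ^ 2) = Real.sqrt (π / b) / (2 * b) := by
  have h := integral_comp_abs (f := fun t : ℝ => t ^ 2 * Real.exp (-b * t ^ 2))
  have h2 : (fun x : ℝ => |x| ^ 2 * Real.exp (-b * |x| ^ 2))
      = fun x : ℝ => x ^ 2 * Real.exp (-b * x ^ 2) := by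
    funext x; rw [sq_abs]
  rw [h2] at h
  rw [h, aux_integral_sq_exp_Ioi hb]
  field_simp

variable {v : ℝ≥0}

lemma aux_gaussPDF0 (hv : v ≠ 0) (x : ℝ) :
    gaussianPDFReal 0 v x = (√(2*π*v))⁻¹ * Real.exp (-(2*(v:ℝ))⁻¹ * x^2) := by
  have hv' : (0:ℝ) < v := lt_of_le_of_ne (v.coe_nonneg) (by exact_mod_cast (Ne.symm hv))
  rw [gaussianPDFReal]
  congr 1
  rw [Real.exp_eq_exp]
  field_simp
  ring

lemma aux_integral_gaussianReal_eq (hv : v ≠ 0) (g : ℝ → ℝ) :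
    ∫ y, g y ∂(gaussianReal 0 v) = ∫ x, gaussianPDFReal 0 v x * g x := by
  rw [gaussianReal_of_var_ne_zero 0 hv]
  have hd : gaussianPDF 0 v = fun x => ((gaussianPDFReal 0 v x).toNNReal : ℝ≥0∞) := rfl
  rw [hd, integral_withDensity_eq_integral_smul
    (measurable_gaussianPDFReal 0 v).real_toNNReal g]
  congr 1
  funext x
  rw [NNReal.smul_def, smul_eq_mul, Real.coe_toNNReal _ (gaussianPDFReal_nonneg 0 v x)]

lemma aux_integrable_gauss_mul (hv : v ≠ 0) {g : ℝ → ℝ}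
    (hg : Integrable (fun x => Real.exp (-(2*(v:ℝ))⁻¹ * x^2) * g x) volume) :
    Integrable g (gaussianReal 0 v) := by
  have hv' : (0:ℝ) < v := lt_of_le_of_ne (v.coe_nonneg) (by exact_mod_cast (Ne.symm hv))
  rw [gaussianReal_of_var_ne_zero 0 hv]
  have hd : gaussianPDF 0 v = fun x => ((gaussianPDFReal 0 v x).toNNReal : ℝ≥0∞) := rfl
  rw [hd, integrable_withDensity_iff_integrable_smul
    (measurable_gaussianPDFReal 0 v).real_toNNReal]
  have : (fun x => ((gaussianPDFReal 0 v x).toNNReal : ℝ≥0) • g x)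
      = fun x => (√(2*π*v))⁻¹ * (Real.exp (-(2*(v:ℝ))⁻¹ * x^2) * g x) := by
    funext x
    rw [NNReal.smul_def, smul_eq_mul, Real.coe_toNNReal _ (gaussianPDFReal_nonneg 0 v x),
      aux_gaussPDF0 hv, mul_assoc]
  rw [this]
  exact hg.const_mul _

lemma aux_memℒp_two_id_gaussianReal (v : ℝ≥0) : MemLp (id : ℝ → ℝ) 2 (gaussianReal 0 v) := by
  by_cases hv : v = 0
  · subst hv
    rw [gaussianReal_zero_var]
    refine (memLp_const (0:ℝ)).ae_eq ?_
    rw [Filter.EventuallyEq, ae_dirac_eq]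
    simp
  · have hv' : (0:ℝ) < v := lt_of_le_of_ne (v.coe_nonneg) (by exact_mod_cast (Ne.symm hv))
    refine memLp_two_iff_integrable_sq aestronglyMeasurable_id |>.mpr ?_
    refine aux_integrable_gauss_mul hv ?_
    have h := aux_integrable_sq_exp (b := (2*(v:ℝ))⁻¹) (by positivity)
    exact h.congr (Filter.Eventually.of_forall fun x => by simp [id]; ring)

lemma aux_integral_id_gaussianReal0 (v : ℝ≥0) : ∫ x, x ∂(gaussianReal 0 v) = 0 := by
  by_cases hv : v = 0
  · subst hv; simp
  · rw [aux_integral_gaussianReal_eq hv]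
    set f : ℝ → ℝ := fun x => gaussianPDFReal 0 v x * x with hf
    have hodd : ∀ x, f (-x) = - f x := by
      intro x
      rw [hf]
      simp only [aux_gaussPDF0 hv, neg_sq]
      ring
    have h := MeasureTheory.integral_neg_eq_self f volume
    have : ∫ x, f x = - ∫ x, f x := by
      conv_lhs => rw [← h]
      rw [← integral_neg]
      congr 1; funext x; rw [hodd]
    linarith [this]

lemma aux_integral_sq_gaussianReal0 (v : ℝ≥0) : ∫ x, x^2 ∂(gaussianReal 0 v) = v := by
  by_cases hv : v = 0
  · subst hv; simp
  · have hv' : (0:ℝ) < v := lt_of_le_of_ne (v.coe_nonneg) (by exact_mod_cast (Ne.symm hv))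
    rw [aux_integral_gaussianReal_eq hv]
    have : (fun x => gaussianPDFReal 0 v x * x ^ 2)
        = fun x => (√(2*π*v))⁻¹ * (x ^ 2 * Real.exp (-(2*(v:ℝ))⁻¹ * x^2)) := by
      funext x; rw [aux_gaussPDF0 hv]; ring
    rw [this, integral_const_mul, aux_integral_sq_exp (by positivity)]
    have h1 : π / (2*(v:ℝ))⁻¹ = 2*π*v := by field_simp
    rw [h1]
    have h2 : (2 * ((2:ℝ) * v)⁻¹) = (v:ℝ)⁻¹ := by field_simp
    rw [h2]
    have h3 : (0:ℝ) < 2*π*v := by positivity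
    field_simp

lemma aux_mp_unique_symm {n : Type*} [Fintype n] [DecidableEq n]
    (A B : Matrix n n ℝ) (hAs : Aᵀ = A)
    (h1 : A * B * A = A) (h2 : B * A * B = B)
    (h3 : (A * B)ᵀ = A * B) (h4 : (B * A)ᵀ = B * A) : Bᵀ = B := by
  set C := Bᵀ with hC
  have hC1 : A * C * A = A := by
    have e : (A * B * A)ᵀ = A * C * A := by
      rw [transpose_mul, transpose_mul, hAs, hC]; noncomm_ring
    rw [← e, h1, hAs]
  have hC2 : C * A * C = C := by
    have e : (B * A * B)ᵀ = C * A * C := by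
      rw [transpose_mul, transpose_mul, hAs, hC]; noncomm_ring
    rw [← e, h2]
  have hC3 : A * C = B * A := by
    rw [hC, ← h4, transpose_mul, hAs]
  have hC4 : C * A = A * B := by
    rw [hC, ← h3, transpose_mul, hAs]
  have hAB : A * B = A * C := by
    calc A * B = (A * C * A) * B := by rw [hC1]
    _ = (A * C) * (A * B) := by noncomm_ring
    _ = (A * C) * (C * A) := by rw [hC4]
    _ = (B * A) * (C * A) := by rw [hC3]
    _ = B * (A * C * A) := by noncomm_ring
    _ = B * A := by rw [hC1]
    _ = A * C := by rw [hC3]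
  calc Bᵀ = C := rfl
  _ = C * A * C := hC2.symm
  _ = (A * B) * C := by rw [← hC4]
  _ = (A * C) * C := by rw [hAB]
  _ = (B * A) * C := by rw [hC3]
  _ = B * (A * C) := by noncomm_ring
  _ = B * (A * B) := by rw [hAB]
  _ = B * A * B := by noncomm_ring
  _ = B := h2

variable {Ω : Type*} [MeasurableSpace Ω]

lemma aux_memℒp_mul_integrable {μ : Measure Ω} {u w : Ω → ℝ}
    (hu : MemLp u 2 μ) (hw : MemLp w 2 μ) :
    Integrable (fun ω => u ω * w ω) μ := by
  have h := hu.smul (E := ℝ) (φ := w) hw (r := 1)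
  rw [memLp_one_iff_integrable] at h
  exact h.congr (Filter.Eventually.of_forall fun ω => by
    simp [Pi.smul_apply, smul_eq_mul, mul_comm])

lemma aux_variance_lin_comb (μ : Measure Ω) [IsProbabilityMeasure μ]
    {n p : ℕ} (θ : Ω → Fin n → ℝ) (ε : Ω → Fin p → ℝ)
    (hθL2 : ∀ i, MemLp (fun ω => θ ω i) 2 μ)
    (hεL2 : ∀ i, MemLp (fun ω => ε ω i) 2 μ)
    (v w : ℝ)
    (hθmean : ∀ i, ∫ ω, θ ω i ∂μ = 0)
    (hθcov : ∀ i j, ∫ ω, θ ω i * θ ω j ∂μ = if i = j then v else 0)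
    (hεmean : ∀ i, ∫ ω, ε ω i ∂μ = 0)
    (hεcov : ∀ i j, ∫ ω, ε ω i * ε ω j ∂μ = if i = j then w else 0)
    (hindep : IndepFun θ ε μ)
    (a : Fin n → ℝ) (b : Fin p → ℝ) (c : ℝ) :
    variance (fun ω => (∑ i, a i * θ ω i) + (∑ j, b j * ε ω j) + c) μ
      = v * (∑ i, (a i)^2) + w * (∑ j, (b j)^2) := by
  set f : Ω → ℝ := fun ω => ∑ i, a i * θ ω i with hf
  set g : Ω → ℝ := fun ω => ∑ j, b j * ε ω j with hg
  have hfL2 : MemLp f 2 μ := by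
    have h := memLp_finset_sum' (μ := μ) (p := 2) Finset.univ
      (f := fun i ω => a i * θ ω i) (fun i _ => (hθL2 i).const_mul (a i))
    refine h.ae_eq (Filter.Eventually.of_forall fun ω => ?_)
    simp [hf]
  have hgL2 : MemLp g 2 μ := by
    have h := memLp_finset_sum' (μ := μ) (p := 2) Finset.univ
      (f := fun j ω => b j * ε ω j) (fun j _ => (hεL2 j).const_mul (b j))
    refine h.ae_eq (Filter.Eventually.of_forall fun ω => ?_)
    simp [hg]
  have hZL2 : MemLp (fun ω => f ω + g ω + c) 2 μ :=
    (hfL2.add hgL2).add (memLp_const c)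
  have hθint : ∀ i, Integrable (fun ω => θ ω i) μ := fun i => (hθL2 i).integrable one_le_two
  have hεint : ∀ j, Integrable (fun ω => ε ω j) μ := fun j => (hεL2 j).integrable one_le_two
  have hfint : Integrable f μ := hfL2.integrable one_le_two
  have hgint : Integrable g μ := hgL2.integrable one_le_two
  have hfmean : ∫ ω, f ω ∂μ = 0 := by
    rw [hf, integral_finset_sum _ (fun i _ => (hθint i).const_mul (a i))]
    simp [integral_const_mul, hθmean]
  have hgmean : ∫ ω, g ω ∂μ = 0 := by
    rw [hg, integral_finset_sum _ (fun j _ => (hεint j).const_mul (b j))]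
    simp [integral_const_mul, hεmean]
  have hfsq : ∫ ω, f ω * f ω ∂μ = v * ∑ i, (a i)^2 := by
    have e : (fun ω => f ω * f ω)
        = fun ω => ∑ i, ∑ j, (a i * a j) * (θ ω i * θ ω j) := by
      funext ω
      rw [hf, Finset.sum_mul_sum]
      exact Finset.sum_congr rfl fun i _ => Finset.sum_congr rfl fun j _ => by ring
    rw [e, integral_finset_sum _ (fun i _ => integrable_finset_sum _ (fun j _ =>
      (aux_memℒp_mul_integrable (hθL2 i) (hθL2 j)).const_mul _))]
    have e2 : ∀ i : Fin n, ∫ ω, ∑ j, (a i * a j) * (θ ω i * θ ω j) ∂μ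
        = ∑ j, (a i * a j) * ∫ ω, θ ω i * θ ω j ∂μ := by
      intro i
      rw [integral_finset_sum _ (fun j _ =>
        (aux_memℒp_mul_integrable (hθL2 i) (hθL2 j)).const_mul _)]
      exact Finset.sum_congr rfl fun j _ => integral_const_mul _ _
    rw [Finset.sum_congr rfl fun i _ => e2 i]
    simp only [hθcov, mul_ite, mul_zero]
    rw [Finset.mul_sum]
    refine Finset.sum_congr rfl fun i _ => ?_
    rw [Finset.sum_ite_eq Finset.univ i (fun j => a i * a j * v)]
    simp only [Finset.mem_univ, if_true]
    ring
  have hgsq : ∫ ω, g ω * g ω ∂μ = w * ∑ j, (b j)^2 := by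
    have e : (fun ω => g ω * g ω)
        = fun ω => ∑ i, ∑ j, (b i * b j) * (ε ω i * ε ω j) := by
      funext ω
      rw [hg, Finset.sum_mul_sum]
      exact Finset.sum_congr rfl fun i _ => Finset.sum_congr rfl fun j _ => by ring
    rw [e, integral_finset_sum _ (fun i _ => integrable_finset_sum _ (fun j _ =>
      (aux_memℒp_mul_integrable (hεL2 i) (hεL2 j)).const_mul _))]
    have e2 : ∀ i : Fin p, ∫ ω, ∑ j, (b i * b j) * (ε ω i * ε ω j) ∂μ
        = ∑ j, (b i * b j) * ∫ ω, ε ω i * ε ω j ∂μ := by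
      intro i
      rw [integral_finset_sum _ (fun j _ =>
        (aux_memℒp_mul_integrable (hεL2 i) (hεL2 j)).const_mul _)]
      exact Finset.sum_congr rfl fun j _ => integral_const_mul _ _
    rw [Finset.sum_congr rfl fun i _ => e2 i]
    simp only [hεcov, mul_ite, mul_zero]
    rw [Finset.mul_sum]
    refine Finset.sum_congr rfl fun i _ => ?_
    rw [Finset.sum_ite_eq Finset.univ i (fun j => b i * b j * w)]
    simp only [Finset.mem_univ, if_true]
    ring
  have hfgindep : IndepFun f g μ := by
    have hF : Measurable (fun y : Fin n → ℝ => ∑ i, a i * y i) := by fun_prop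
    have hG : Measurable (fun y : Fin p → ℝ => ∑ j, b j * y j) := by fun_prop
    exact hindep.comp hF hG
  have hfg : ∫ ω, f ω * g ω ∂μ = 0 := by
    have h := hfgindep.integral_mul_eq_mul_integral hfint.aestronglyMeasurable hgint.aestronglyMeasurable
    have e : integral μ (f * g) = ∫ ω, f ω * g ω ∂μ := rfl
    rw [e] at h
    rw [h, hfmean, hgmean, mul_zero]
  have hint_ff : Integrable (fun ω => f ω * f ω) μ := aux_memℒp_mul_integrable hfL2 hfL2
  have hint_gg : Integrable (fun ω => g ω * g ω) μ := aux_memℒp_mul_integrable hgL2 hgL2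
  have hint_fg : Integrable (fun ω => f ω * g ω) μ := aux_memℒp_mul_integrable hfL2 hgL2
  have eZ : ∫ ω, (f ω + g ω + c) ∂μ = c := by
    have h1 : Integrable (fun ω => f ω + g ω) μ := hfint.add hgint
    rw [integral_add h1 (integrable_const c), integral_add hfint hgint, hfmean, hgmean,
      integral_const]
    simp
  have eZ2 : ∫ ω, (f ω + g ω + c) ^ 2 ∂μ
      = v * (∑ i, (a i)^2) + w * (∑ j, (b j)^2) + c ^ 2 := by
    have hA1 : Integrable (fun ω => f ω * f ω + g ω * g ω) μ := hint_ff.add hint_gg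
    have hA : Integrable (fun ω => f ω * f ω + g ω * g ω + 2 * (f ω * g ω)) μ :=
      hA1.add (hint_fg.const_mul 2)
    have hB : Integrable (fun ω => (2 * c) * f ω + ((2 * c) * g ω + c ^ 2)) μ :=
      (hfint.const_mul (2*c)).add ((hgint.const_mul (2*c)).add (integrable_const (c^2)))
    have hB2 : Integrable (fun ω => (2 * c) * g ω + c ^ 2) μ :=
      (hgint.const_mul (2*c)).add (integrable_const (c^2))
    have e : (fun ω => ((f ω + g ω + c)) ^ 2)
        = fun ω => (f ω * f ω + g ω * g ω + 2 * (f ω * g ω))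
            + ((2 * c) * f ω + ((2 * c) * g ω + c ^ 2)) := by
      funext ω; ring
    have hcf : Integrable (fun ω => (2 * c) * f ω) μ := hfint.const_mul (2*c)
    have hcg : Integrable (fun ω => (2 * c) * g ω) μ := hgint.const_mul (2*c)
    have hfg2 : Integrable (fun ω => 2 * (f ω * g ω)) μ := hint_fg.const_mul 2
    rw [e, integral_add hA hB, integral_add hA1 hfg2,
      integral_add hint_ff hint_gg, integral_add hcf hB2,
      integral_add hcg (integrable_const (c^2)),
      integral_const_mul, integral_const_mul, integral_const_mul,
      hfsq, hgsq, hfg, hfmean, hgmean, integral_const]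
    simp
  rw [variance_eq_sub hZL2]
  simp only [Pi.pow_apply]
  rw [eZ2, eZ]
  ring

end Aux

/-- Variance of the over-parameterized gradient-descent linear predictor
`h(x) = xᵀθ̂`, `θ̂ = P⊥θ₀ + Σ⁺XᵀY`, with `θ₀ ∼ N(0, (1/N)I)` independent of the noise:
`Var(h(x)) = (1/N)‖P⊥x‖² + σ² Tr(xxᵀΣ⁺)`. -/
theorem stmt4 {Ω : Type*} [MeasurableSpace Ω] (μ : Measure Ω) [IsProbabilityMeasure μ]
    {m N : ℕ} (hN : 0 < N) (hmN : m < N) (X : Matrix (Fin m) (Fin N) ℝ)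
    (Splus : Matrix (Fin N) (Fin N) ℝ)
    -- Moore-Penrose pseudoinverse conditions for `Σ = XᵀX`
    (hS1 : (Xᵀ * X) * Splus * (Xᵀ * X) = Xᵀ * X)
    (hS2 : Splus * (Xᵀ * X) * Splus = Splus)
    (hS3 : ((Xᵀ * X) * Splus).IsSymm)
    (hS4 : (Splus * (Xᵀ * X)).IsSymm)
    -- `P` is the orthogonal projection onto the null space of `X`
    (P : Matrix (Fin N) (Fin N) ℝ)
    (hPsymm : P.IsSymm) (hPidem : P * P = P)
    (hXP : X * P = 0) (hPnull : ∀ v, X *ᵥ v = 0 → P *ᵥ v = v)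
    (θstar : Fin N → ℝ) (ε : Ω → Fin m → ℝ) (σ : ℝ)
    (hεmeas : Measurable ε)
    (hεL2 : ∀ i, MemLp (fun ω => ε ω i) 2 μ)
    (hεmean : ∀ i, ∫ ω, ε ω i ∂μ = 0)
    (hεcov : ∀ i j, ∫ ω, ε ω i * ε ω j ∂μ = if i = j then σ ^ 2 else 0)
    -- Gaussian initialization `θ₀ ∼ N(0, (1/N) I_N)`, independent of `ε`
    (θ₀ : Ω → Fin N → ℝ) (hθmeas : Measurable θ₀)
    (hgauss : ∀ i, μ.map (fun ω => θ₀ ω i) = gaussianReal 0 ((N : ℝ≥0))⁻¹)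
    (hiid : iIndepFun (fun i ω => θ₀ ω i) μ)
    (hindep : IndepFun θ₀ ε μ)
    (x : Fin N → ℝ) :
    variance (fun ω =>
        x ⬝ᵥ (P *ᵥ θ₀ ω + (Splus * Xᵀ) *ᵥ (X *ᵥ θstar + ε ω))) μ
      = (1 / N) * ((P *ᵥ x) ⬝ᵥ (P *ᵥ x))
        + σ ^ 2 * Matrix.trace (vecMulVec x x * Splus) := by
  classical
  set vN : ℝ≥0 := ((N : ℝ≥0))⁻¹ with hvN
  have hvcoe : ((vN : ℝ)) = (N : ℝ)⁻¹ := by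
    rw [hvN]; push_cast; ring
  -- componentwise facts about θ₀
  have hmi : ∀ i, Measurable (fun ω => θ₀ ω i) :=
    fun i => (measurable_pi_apply i).comp hθmeas
  have hθL2 : ∀ i, MemLp (fun ω => θ₀ ω i) 2 μ := by
    intro i
    have h : MemLp (id : ℝ → ℝ) 2 (μ.map (fun ω => θ₀ ω i)) := by
      rw [hgauss i]; exact aux_memℒp_two_id_gaussianReal _
    have h2 := (memLp_map_measure_iff aestronglyMeasurable_id
      (hmi i).aemeasurable).mp h
    simpa [Function.comp] using h2
  have hθmean : ∀ i, ∫ ω, θ₀ ω i ∂μ = 0 := by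
    intro i
    have h := integral_map (μ := μ) (φ := fun ω => θ₀ ω i) (hmi i).aemeasurable
      (f := (id : ℝ → ℝ)) aestronglyMeasurable_id
    rw [hgauss i] at h
    simp only [id_eq] at h
    rw [← h, aux_integral_id_gaussianReal0]
  have hθsq : ∀ i, ∫ ω, (θ₀ ω i) * (θ₀ ω i) ∂μ = (N : ℝ)⁻¹ := by
    intro i
    have h := integral_map (μ := μ) (φ := fun ω => θ₀ ω i) (hmi i).aemeasurable
      (f := fun y : ℝ => y * y) ((measurable_id.mul measurable_id).aestronglyMeasurable)
    rw [hgauss i] at h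
    have h2 := aux_integral_sq_gaussianReal0 vN
    simp only [pow_two] at h2
    rw [h2] at h
    rw [← h, hvcoe]
  have hθcov : ∀ i j, ∫ ω, θ₀ ω i * θ₀ ω j ∂μ = if i = j then (N : ℝ)⁻¹ else 0 := by
    intro i j
    by_cases hij : i = j
    · subst hij; simp [hθsq i]
    · simp only [hij, if_false]
      have hind : IndepFun (fun ω => θ₀ ω i) (fun ω => θ₀ ω j) μ :=
        hiid.indepFun hij
      have h := hind.integral_mul_eq_mul_integral
        ((hθL2 i).integrable one_le_two).aestronglyMeasurable ((hθL2 j).integrable one_le_two).aestronglyMeasurable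
      have e : integral μ ((fun ω => θ₀ ω i) * (fun ω => θ₀ ω j))
          = ∫ ω, θ₀ ω i * θ₀ ω j ∂μ := rfl
      rw [e] at h
      rw [h, hθmean i, hθmean j, mul_zero]
  -- symmetry of the pseudoinverse
  have hAs : (Xᵀ * X)ᵀ = Xᵀ * X := by rw [transpose_mul, transpose_transpose]
  have hsymm : Splusᵀ = Splus :=
    aux_mp_unique_symm (Xᵀ * X) Splus hAs hS1 hS2 hS3 hS4
  -- rewrite the random variable
  set a : Fin N → ℝ := x ᵥ* P with ha
  set b : Fin m → ℝ := x ᵥ* (Splus * Xᵀ) with hb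
  set c : ℝ := x ⬝ᵥ ((Splus * Xᵀ) *ᵥ (X *ᵥ θstar)) with hc
  have hfun : (fun ω => x ⬝ᵥ (P *ᵥ θ₀ ω + (Splus * Xᵀ) *ᵥ (X *ᵥ θstar + ε ω)))
      = fun ω => (∑ i, a i * θ₀ ω i) + (∑ j, b j * ε ω j) + c := by
    funext ω
    rw [dotProduct_add, mulVec_add, dotProduct_add]
    rw [dotProduct_mulVec x P (θ₀ ω), dotProduct_mulVec x (Splus * Xᵀ) (ε ω)]
    have e1 : (x ᵥ* P) ⬝ᵥ θ₀ ω = ∑ i, a i * θ₀ ω i := rfl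
    have e2 : (x ᵥ* (Splus * Xᵀ)) ⬝ᵥ ε ω = ∑ j, b j * ε ω j := rfl
    rw [e1, e2, ← hc]
    ring
  rw [hfun, aux_variance_lin_comb μ θ₀ ε hθL2 hεL2 ((N : ℝ)⁻¹) (σ ^ 2)
    hθmean hθcov hεmean hεcov hindep a b c]
  -- algebraic identifications
  have haP : a = P *ᵥ x := by
    rw [ha]
    conv_lhs => rw [← hPsymm.eq]
    rw [vecMul_transpose]
  have hasum : ∑ i, (a i)^2 = (P *ᵥ x) ⬝ᵥ (P *ᵥ x) := by
    rw [haP]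
    simp [dotProduct, pow_two]
  have hMMt : (Splus * Xᵀ) * (Splus * Xᵀ)ᵀ = Splus := by
    rw [transpose_mul, transpose_transpose, hsymm]
    rw [← Matrix.mul_assoc, Matrix.mul_assoc Splus Xᵀ X]
    exact hS2
  have hbv : b = (Splus * Xᵀ)ᵀ *ᵥ x := by rw [hb, mulVec_transpose]
  have hbsum : ∑ j, (b j)^2 = x ⬝ᵥ (Splus *ᵥ x) := by
    have e1 : ∑ j, (b j)^2 = b ⬝ᵥ b := by simp [dotProduct, pow_two]
    have e2 : b ⬝ᵥ b = x ⬝ᵥ ((Splus * Xᵀ) *ᵥ b) := by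
      conv_lhs => rw [hb]
      exact (dotProduct_mulVec x (Splus * Xᵀ) b).symm
    have e3 : (Splus * Xᵀ) *ᵥ b = Splus *ᵥ x := by
      rw [hbv, mulVec_mulVec, hMMt]
    rw [e1, e2, e3]
  have hentry : ∀ i j, Splus j i = Splus i j := by
    intro i j
    conv_lhs => rw [← hsymm]
    rw [transpose_apply]
  have htr : Matrix.trace (vecMulVec x x * Splus) = x ⬝ᵥ (Splus *ᵥ x) := by
    simp only [Matrix.trace, Matrix.diag, Matrix.mul_apply, Matrix.vecMulVec_apply,
      dotProduct, Matrix.mulVec, Finset.mul_sum]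
    rw [Finset.sum_comm]
    refine Finset.sum_congr rfl fun i _ => Finset.sum_congr rfl fun j _ => ?_
    rw [hentry j i]
    ring
  rw [hasum, hbsum, htr, one_div]
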